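/- Let n ≥ 2, let M = (Fin n → ℤ) ⋊ Equiv.Perm (Fin n) be the middle group Mid(B_n), let S be its full generating set {(±e_i, 1) : i} ∪ {r_{ij}(k) = (k(e_i − e_j), swap i j) : i ≠ j, k ∈ ℤ}, let ℓ be word length with respect to S, and let w = t_1 · r_{12} · r_{23} ⋯ r_{(n−1)n} be the special element, where t_i = (e_i, 1) and r_{ij} = r_{ij}(0). If u lies in the interval [1,w] = {u : ℓ(u) + ℓ(u⁻¹w) = ℓ(w)} and u w = w u, then u = 1 or u = w. -/

import Mathlib

open Multiplicative

/-- The automorphism of `Multiplicative (Fin n → A)` permuting coordinates by `π`. -/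
def permMulAut {n : ℕ} {A : Type*} [AddCommGroup A] (π : Equiv.Perm (Fin n)) :
    MulAut (Multiplicative (Fin n → A)) where
  toFun v := ofAdd fun i => toAdd v (π⁻¹ i)
  invFun v := ofAdd fun i => toAdd v (π i)
  left_inv v := by
    refine Multiplicative.toAdd.injective (funext fun i => ?_)
    simp
  right_inv v := by
    refine Multiplicative.toAdd.injective (funext fun i => ?_)
    simp
  map_mul' a b := rfl

/-- The coordinate-permutation action of `Equiv.Perm (Fin n)` on `Multiplicative (Fin n → A)`. -/
def permAction (n : ℕ) (A : Type*) [AddCommGroup A] :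
    Equiv.Perm (Fin n) →* MulAut (Multiplicative (Fin n → A)) where
  toFun := permMulAut
  map_one' := by
    refine MulEquiv.ext fun v => ?_
    refine Multiplicative.toAdd.injective (funext fun i => ?_)
    simp [permMulAut]
  map_mul' π σ := by
    refine MulEquiv.ext fun v => ?_
    refine Multiplicative.toAdd.injective (funext fun i => ?_)
    simp [permMulAut]

/-- The middle group `Mid(B_n) = (Fin n → ℤ) ⋊ Equiv.Perm (Fin n)`. -/
abbrev Mid (n : ℕ) := Multiplicative (Fin n → ℤ) ⋊[permAction n ℤ] Equiv.Perm (Fin n)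

/-- The full generating set of the middle group: the translations `(±e_i, 1)` and the
reflections `r_{ij}(k) = (k(e_i − e_j), swap i j)` for `i ≠ j` and `k ∈ ℤ`. -/
def midGens (n : ℕ) : Set (Mid n) :=
  {x | (∃ i : Fin n, x = SemidirectProduct.inl (ofAdd (Pi.single i (1 : ℤ))) ∨
          x = SemidirectProduct.inl (ofAdd (-Pi.single i (1 : ℤ)))) ∨
       (∃ i j : Fin n, ∃ k : ℤ, i ≠ j ∧
          x = ⟨ofAdd (k • (Pi.single i (1 : ℤ) - Pi.single j (1 : ℤ))), Equiv.swap i j⟩)}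

/-- Word length with respect to a generating set `S`. -/
noncomputable def wordLength {G : Type*} [Group G] (S : Set G) (g : G) : ℕ :=
  sInf {k | ∃ l : List G, l.length = k ∧ (∀ x ∈ l, x ∈ S) ∧ l.prod = g}

/-- The special element `w = t_1 r_{12} r_{23} ⋯ r_{(n−1)n}` of the middle group. -/
def midSpecialElt (m : ℕ) : Mid (m + 2) :=
  SemidirectProduct.inl (φ := permAction (m + 2) ℤ)
      (ofAdd (Pi.single (0 : Fin (m + 2)) (1 : ℤ))) *
    ((List.finRange (m + 1)).map
      (fun i => (SemidirectProduct.inr (Equiv.swap i.castSucc i.succ) : Mid (m + 2)))).prod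

namespace MidProof

open Equiv SemidirectProduct

/-- partial products of adjacent swaps -/
lemma partial_swap_prod (m : ℕ) (j : ℕ) (hj : j ≤ m + 1) : ∀ x : Fin (m + 2),
    ((((List.finRange (m+1)).take j).map
      (fun i => Equiv.swap (i.castSucc) i.succ)).prod : Equiv.Perm (Fin (m+2))) x
    = if (x : ℕ) < j then x + 1 else if (x : ℕ) = j then 0 else x := by
  induction j with
  | zero =>
    intro x
    simp only [List.take_zero, List.map_nil, List.prod_nil, Equiv.Perm.one_apply]
    rw [if_neg (by omega)]
    split_ifs with h
    · exact Fin.ext (by simp [h])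
    · rfl
  | succ j ih =>
    intro x
    have hj' : j < m + 1 := hj
    have hjm : j ≤ m + 1 := le_of_lt hj'
    have htake : (List.finRange (m+1)).take (j+1)
        = (List.finRange (m+1)).take j ++ [⟨j, hj'⟩] := by
      rw [List.take_succ]
      congr
      rw [List.getElem?_eq_getElem (by simpa using hj')]
      simp
    rw [htake]
    simp only [List.map_append, List.prod_append, List.map_cons, List.map_nil,
      List.prod_cons, List.prod_nil, mul_one]
    rw [Equiv.Perm.mul_apply]
    have hcs : ((⟨j, hj'⟩ : Fin (m+1)).castSucc : Fin (m+2)) = ⟨j, by omega⟩ := rfl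
    have hsc : ((⟨j, hj'⟩ : Fin (m+1)).succ : Fin (m+2)) = ⟨j+1, by omega⟩ := rfl
    rw [hcs, hsc]
    have hv1 : ((⟨j, by omega⟩ : Fin (m+2)) : ℕ) = j := rfl
    have hv2 : ((⟨j+1, by omega⟩ : Fin (m+2)) : ℕ) = j + 1 := rfl
    rcases lt_trichotomy (x : ℕ) j with h | h | h
    · rw [Equiv.swap_apply_of_ne_of_ne (by simp [Fin.ext_iff]; omega)
        (by simp [Fin.ext_iff]; omega)]
      rw [ih hjm x]
      rw [if_pos h, if_pos (by omega : (x:ℕ) < j + 1)]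
    · have hxj : x = ⟨j, by omega⟩ := Fin.ext (by rw [hv1, h])
      rw [Equiv.swap_apply_def, if_pos hxj, ih hjm]
      rw [if_neg (by rw [hv2]; omega), if_neg (by rw [hv2]; omega),
        if_pos (by omega : (x:ℕ) < j + 1)]
      refine (Fin.ext ?_).symm
      rw [Fin.val_add_one_of_lt (by rw [Fin.lt_def, Fin.val_last]; omega)]
      rw [hv2, h]
    · rcases Nat.eq_or_lt_of_le h with h' | h'
      · have hxj : x = ⟨j+1, by omega⟩ := Fin.ext (by rw [hv2]; omega)
        rw [Equiv.swap_apply_def, if_neg (by rw [hxj]; simp [Fin.ext_iff]),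
          if_pos hxj, ih hjm]
        rw [if_neg (by rw [hv1]; omega), if_pos (by rw [hv1]),
          if_neg (by omega), if_pos (by omega)]
      · rw [Equiv.swap_apply_of_ne_of_ne (by simp [Fin.ext_iff]; omega)
          (by simp [Fin.ext_iff]; omega)]
        rw [ih hjm x]
        rw [if_neg (by omega), if_neg (by omega), if_neg (by omega), if_neg (by omega)]

lemma swap_prod_eq_finRotate (m : ℕ) :
    (((List.finRange (m+1)).map
      (fun i => Equiv.swap (i.castSucc) i.succ)).prod : Equiv.Perm (Fin (m+2)))
    = finRotate (m+2) := by
  ext x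
  have := partial_swap_prod m (m+1) le_rfl x
  rw [List.take_of_length_le (by simp)] at this
  rw [this, finRotate_succ_apply]
  rcases lt_or_eq_of_le (Nat.lt_succ_iff.mp x.isLt) with h | h
  · rw [if_pos h]
  · rw [if_neg (by omega), if_pos h]
    have hx : x = Fin.last (m+1) := Fin.ext (by simp [h])
    rw [hx, Fin.last_add_one]

end MidProof
namespace MidProof

lemma permAction_apply {n : ℕ} (π : Equiv.Perm (Fin n)) (v : Multiplicative (Fin n → ℤ)) :
    (permAction n ℤ π) v = ofAdd (fun i => toAdd v (π⁻¹ i)) := rfl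

lemma w_eq (m : ℕ) : midSpecialElt m =
    ⟨ofAdd (Pi.single (0 : Fin (m+2)) (1 : ℤ)), finRotate (m+2)⟩ := by
  rw [midSpecialElt]
  have h1 : (List.finRange (m + 1)).map
      (fun i => (SemidirectProduct.inr (Equiv.swap i.castSucc i.succ) : Mid (m + 2)))
      = ((List.finRange (m + 1)).map (fun i => Equiv.swap i.castSucc i.succ)).map
        SemidirectProduct.inr := by
    rw [List.map_map]; rfl
  rw [h1, ← map_list_prod (SemidirectProduct.inr : _ →* Mid (m+2)), swap_prod_eq_finRotate]
  ext
  · simp [SemidirectProduct.mul_left]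
  · simp [SemidirectProduct.mul_right]

open Fin.NatCast Fin.CommRing in
lemma sigma_pow_apply (m : ℕ) (k : ℕ) (x : Fin (m+2)) :
    ((finRotate (m+2)) ^ k) x = x + (k : Fin (m+2)) := by
  induction k with
  | zero => simp
  | succ k ih =>
    rw [pow_succ', Equiv.Perm.mul_apply, finRotate_succ_apply, Nat.cast_add, Nat.cast_one]
    rw [ih]
    ring

lemma sigma_pow_n (m : ℕ) : (finRotate (m+2)) ^ (m+2) = 1 := by
  ext x
  rw [sigma_pow_apply]
  simp

lemma w_pow (m : ℕ) (p : ℕ) (hp : p ≤ m + 2) : (midSpecialElt m) ^ p =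
    ⟨ofAdd (fun i => if (i : ℕ) < p then (1:ℤ) else 0), (finRotate (m+2)) ^ p⟩ := by
  induction p with
  | zero =>
    rw [pow_zero]
    refine SemidirectProduct.ext ?_ ?_
    · refine Multiplicative.toAdd.injective (funext fun i => ?_)
      show (0 : ℤ) = if (i:ℕ) < 0 then (1:ℤ) else 0
      rw [if_neg (by omega)]
    · show (1 : Equiv.Perm (Fin (m+2))) = (finRotate (m+2)) ^ 0
      rw [pow_zero]
  | succ p ih =>
    have hp' : p < m + 2 := hp
    rw [pow_succ, ih (le_of_lt hp'), w_eq]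
    refine SemidirectProduct.ext ?_ ?_
    · refine Multiplicative.toAdd.injective (funext fun i => ?_)
      show (if (i:ℕ) < p then (1:ℤ) else 0) +
          toAdd ((permAction (m+2) ℤ ((finRotate (m+2))^p)) (ofAdd (Pi.single 0 1))) i
        = (if (i:ℕ) < p + 1 then (1:ℤ) else 0)
      rw [permAction_apply]
      simp only [toAdd_ofAdd]
      have hiff : (((finRotate (m+2))^p)⁻¹ i = 0) ↔ ((i:ℕ) = p) := by
        rw [Equiv.Perm.inv_eq_iff_eq, sigma_pow_apply, zero_add, eq_comm, Fin.ext_iff,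
          Fin.val_cast_of_lt hp', eq_comm]
      rw [Pi.single_apply]
      simp only [hiff]
      split_ifs <;> omega
    · show (finRotate (m+2)) ^ p * finRotate (m+2) = (finRotate (m+2)) ^ (p+1)
      rw [pow_succ]

lemma w_pow_n (m : ℕ) : (midSpecialElt m) ^ (m + 2) =
    SemidirectProduct.inl (ofAdd (fun _ => (1:ℤ))) := by
  rw [w_pow m (m+2) le_rfl]
  refine SemidirectProduct.ext ?_ ?_
  · refine Multiplicative.toAdd.injective (funext fun i => ?_)
    show (if (i:ℕ) < m + 2 then (1:ℤ) else 0) = 1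
    rw [if_pos i.isLt]
  · show (finRotate (m+2)) ^ (m+2) = 1
    exact sigma_pow_n m

end MidProof
namespace MidProof

lemma commuting_eq_zpow (m : ℕ) (u : Mid (m+2))
    (hcomm : u * midSpecialElt m = midSpecialElt m * u) :
    ∃ k : ℤ, u = (midSpecialElt m) ^ k := by
  have hcomm' := hcomm
  rw [w_eq] at hcomm'
  -- right components commute
  have hr : u.right * finRotate (m+2) = finRotate (m+2) * u.right := by
    have h := congrArg SemidirectProduct.right hcomm'
    simpa only [SemidirectProduct.mul_right] using h
  set p : ℕ := ((u.right 0 : Fin (m+2)) : ℕ) with hpdef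
  have hple : p < m + 2 := (u.right 0).isLt
  have hpi : u.right = (finRotate (m+2)) ^ p := by
    have hc : Commute (finRotate (m+2)) u.right := (Commute.eq hr).symm
    ext x
    have h1 : ((finRotate (m+2)) ^ (x : ℕ)) 0 = x := by
      rw [sigma_pow_apply, zero_add, Fin.cast_val_eq_self]
    have h2 : u.right x = ((finRotate (m+2)) ^ (x : ℕ)) (u.right 0) := by
      conv_lhs => rw [← h1]
      rw [← Equiv.Perm.mul_apply, ← Equiv.Perm.mul_apply, (hc.pow_left (x : ℕ)).eq]
    rw [h2, sigma_pow_apply, sigma_pow_apply, hpdef, Fin.cast_val_eq_self,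
      Fin.cast_val_eq_self]
    exact congrArg Fin.val (add_comm _ _)
  -- left components
  set v : Fin (m+2) → ℤ := toAdd u.left with hvdef
  have hl : ∀ i : Fin (m+2), v i + (if u.right⁻¹ i = 0 then (1:ℤ) else 0)
      = (if i = 0 then (1:ℤ) else 0) + v ((finRotate (m+2))⁻¹ i) := by
    intro i
    have h := congrArg SemidirectProduct.left hcomm'
    simp only [SemidirectProduct.mul_left] at h
    have h2 := congrFun (congrArg Multiplicative.toAdd h) i
    simp only [toAdd_mul, Pi.add_apply, permAction_apply, toAdd_ofAdd] at h2
    simpa only [Pi.single_apply] using h2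
  have hrec : ∀ x : Fin (m+2), v (finRotate (m+2) x)
      = v x + (if finRotate (m+2) x = 0 then (1:ℤ) else 0)
        - (if finRotate (m+2) x = u.right 0 then 1 else 0) := by
    intro x
    have h := hl (finRotate (m+2) x)
    rw [show (finRotate (m+2))⁻¹ (finRotate (m+2) x) = x from Equiv.symm_apply_apply _ _] at h
    have hiff : (u.right⁻¹ (finRotate (m+2) x) = 0) ↔ (finRotate (m+2) x = u.right 0) := by
      rw [Equiv.Perm.inv_eq_iff_eq]
    rw [if_congr hiff rfl rfl] at h
    linarith [h]
  have hclaim : ∀ i : Fin (m+2),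
      v i = v 0 - (if 1 ≤ p ∧ p ≤ (i : ℕ) then (1:ℤ) else 0) := by
    intro i
    induction i using Fin.induction with
    | zero => rw [if_neg (by simp only [Fin.val_zero]; omega)]; ring
    | succ i ih =>
      have hx := hrec i.castSucc
      have hsx : finRotate (m+2) i.castSucc = i.succ := by
        rw [finRotate_succ_apply, Fin.coeSucc_eq_succ]
      rw [hsx] at hx
      have hne : (i.succ : Fin (m+2)) ≠ 0 := Fin.succ_ne_zero i
      rw [if_neg hne] at hx
      have hiff2 : (i.succ = u.right 0) ↔ ((i.succ : ℕ) = p) := by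
        rw [hpdef, Fin.ext_iff]
      rw [if_congr hiff2 rfl rfl] at hx
      rw [hx, ih]
      have hval : ((i.succ : Fin (m+2)) : ℕ) = (i.castSucc : ℕ) + 1 := by
        simp [Fin.val_succ, Fin.coe_castSucc]
      rw [hval]
      split_ifs <;> omega
  set q : ℤ := v 0 - (if 1 ≤ p then 1 else 0) with hqdef
  refine ⟨((m:ℤ)+2) * q + (p:ℤ), ?_⟩
  have hsplit : (midSpecialElt m) ^ (((m:ℤ)+2) * q + (p:ℤ))
      = (SemidirectProduct.inl (ofAdd fun _ => (1:ℤ)) : Mid (m+2)) ^ q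
        * (midSpecialElt m) ^ p := by
    rw [zpow_add, zpow_natCast]
    congr 1
    rw [zpow_mul, show ((m:ℤ)+2) = ((m+2 : ℕ) : ℤ) by push_cast; ring, zpow_natCast,
      w_pow_n]
  rw [hsplit, ← map_zpow, w_pow m p (le_of_lt hple)]
  have hofAdd : ((ofAdd fun _ : Fin (m+2) => (1:ℤ)) : Multiplicative (Fin (m+2) → ℤ)) ^ q = ofAdd (fun _ => q) := by
    refine Multiplicative.toAdd.injective ?_
    rw [toAdd_zpow, toAdd_ofAdd, toAdd_ofAdd]
    funext i
    simp
  rw [hofAdd]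
  refine SemidirectProduct.ext ?_ ?_
  · refine Multiplicative.toAdd.injective (funext fun i => ?_)
    rw [SemidirectProduct.mul_left, SemidirectProduct.right_inl, map_one,
      SemidirectProduct.left_inl, MulAut.one_apply]
    simp only [toAdd_mul, toAdd_ofAdd, Pi.add_apply]
    rw [← hvdef]
    rw [hclaim i, hqdef]
    split_ifs <;> omega
  · show u.right = 1 * (finRotate (m+2)) ^ p
    rw [one_mul]
    exact hpi

end MidProof
namespace MidProof

/-- The "total translation" homomorphism. -/
def fsumHom (n : ℕ) : Mid n →* Multiplicative ℤ where
  toFun g := ofAdd (∑ i, toAdd g.left i)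
  map_one' := by
    simp
  map_mul' a b := by
    show ofAdd (∑ i, toAdd (a*b).left i) = ofAdd (∑ i, toAdd a.left i) * ofAdd (∑ i, toAdd b.left i)
    rw [← ofAdd_add]
    congr 1
    rw [SemidirectProduct.mul_left, toAdd_mul, permAction_apply]
    simp only [Pi.add_apply, toAdd_ofAdd, Finset.sum_add_distrib]
    congr 1
    exact Fintype.sum_equiv (a.right⁻¹ : Equiv.Perm (Fin n)) _ _ (fun i => rfl)

lemma fsumHom_apply {n : ℕ} (g : Mid n) :
    fsumHom n g = ofAdd (∑ i, toAdd g.left i) := rfl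

lemma fsumHom_inl {n : ℕ} (y : Fin n → ℤ) :
    fsumHom n (SemidirectProduct.inl (ofAdd y)) = ofAdd (∑ i, y i) := rfl

lemma fsumHom_mk {n : ℕ} (y : Fin n → ℤ) (s : Equiv.Perm (Fin n)) :
    fsumHom n (⟨ofAdd y, s⟩ : Mid n) = ofAdd (∑ i, y i) := rfl

/-- generators have total weight 2 -/
lemma gen_weight {n : ℕ} {x : Mid n} (hx : x ∈ midGens n) :
    2 * (toAdd (fsumHom n x)).natAbs + x.right.support.card ≤ 2 := by
  rcases hx with ⟨i, h | h⟩ | ⟨i, j, k, hij, h⟩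
  · subst h
    rw [fsumHom_inl]
    have h2 : (∑ j, Pi.single i (1:ℤ) j) = 1 := by
      simp [Pi.single_apply]
    rw [h2]
    simp
  · subst h
    rw [fsumHom_inl]
    have h2 : (∑ j : Fin n, (-Pi.single i (1:ℤ)) j) = -1 := by
      simp [Pi.single_apply]
    rw [h2]
    simp
  · subst h
    rw [fsumHom_mk]
    have h1 : (∑ l : Fin n, (k • (Pi.single i (1:ℤ) - Pi.single j 1) : Fin n → ℤ) l) = 0 := by
      simp only [Pi.smul_apply, Pi.sub_apply, smul_eq_mul,
        ← Finset.mul_sum, Finset.sum_sub_distrib]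
      have hi : (∑ l, Pi.single i (1:ℤ) l) = 1 := by simp [Pi.single_apply]
      have hj : (∑ l, Pi.single j (1:ℤ) l) = 1 := by simp [Pi.single_apply]
      rw [hi, hj]
      ring
    rw [h1]
    have h3 : ((⟨ofAdd (k • (Pi.single i (1:ℤ) - Pi.single j 1)), Equiv.swap i j⟩ :
        Mid n)).right = Equiv.swap i j := rfl
    rw [h3, Equiv.Perm.card_support_swap hij]
    simp

lemma word_weight {n : ℕ} (l : List (Mid n)) (hl : ∀ x ∈ l, x ∈ midGens n) :
    2 * (toAdd (fsumHom n l.prod)).natAbs + l.prod.right.support.card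
      ≤ 2 * l.length := by
  induction l with
  | nil =>
    simp only [List.prod_nil, List.length_nil, map_one]
    simp
  | cons a t ih =>
    have ha := hl a List.mem_cons_self
    have ht := ih (fun x hx => hl x (List.mem_cons_of_mem a hx))
    rw [List.prod_cons, List.length_cons]
    have h1 : (toAdd (fsumHom n (a * t.prod))).natAbs
        ≤ (toAdd (fsumHom n a)).natAbs + (toAdd (fsumHom n t.prod)).natAbs := by
      rw [map_mul, toAdd_mul]
      exact Int.natAbs_add_le _ _
    have h2 : (a * t.prod).right.support.card
        ≤ a.right.support.card + t.prod.right.support.card := by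
      have : (a * t.prod).right = a.right * t.prod.right :=
        SemidirectProduct.mul_right a t.prod
      rw [this]
      exact le_trans (Finset.card_le_card (Equiv.Perm.support_mul_le _ _))
        (Finset.card_union_le _ _)
    have := gen_weight ha
    omega

/-- every element admits a word in the generators -/
lemma exists_word {n : ℕ} (g : Mid n) :
    ∃ l : List (Mid n), (∀ x ∈ l, x ∈ midGens n) ∧ l.prod = g := by
  apply Submonoid.exists_list_of_mem_closure
  have h1 : ∀ (i : Fin n) (k : ℤ),
      (SemidirectProduct.inl (ofAdd (Pi.single i k)) : Mid n)
        ∈ Submonoid.closure (midGens n) := by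
    intro i k
    induction k using Int.induction_on with
    | zero =>
      rw [Pi.single_zero, ofAdd_zero, map_one]
      exact one_mem _
    | succ k ih =>
      have : (Pi.single i ((k:ℤ)+1) : Fin n → ℤ) = Pi.single i (k:ℤ) + Pi.single i 1 :=
        Pi.single_add i _ _
      rw [this, ofAdd_add, map_mul]
      exact mul_mem ih (Submonoid.subset_closure (Or.inl ⟨i, Or.inl rfl⟩))
    | pred k ih =>
      have : (Pi.single i (-(k:ℤ)-1) : Fin n → ℤ) = Pi.single i (-(k:ℤ)) + (-Pi.single i 1) := by
        funext t
        rcases eq_or_ne t i with ht | ht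
        · subst ht
          simp only [Pi.single_eq_same, Pi.add_apply, Pi.neg_apply]
          ring
        · simp only [Pi.single_eq_of_ne ht, Pi.add_apply, Pi.neg_apply]
          ring
      rw [this, ofAdd_add, map_mul]
      exact mul_mem ih (Submonoid.subset_closure (Or.inl ⟨i, Or.inr rfl⟩))
  have hswap : ∀ π : Equiv.Perm (Fin n),
      (SemidirectProduct.inr π : Mid n) ∈ Submonoid.closure (midGens n) := by
    intro π
    refine Equiv.Perm.swap_induction_on π (by rw [map_one]; exact one_mem _)
      (fun f x y hxy ihf => ?_)
    rw [map_mul]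
    refine mul_mem (Submonoid.subset_closure (Or.inr ⟨x, y, 0, hxy, ?_⟩)) ihf
    refine SemidirectProduct.ext ?_ rfl
    simp
  have key : ∀ x : Fin n → ℤ,
      (SemidirectProduct.inl (ofAdd x) : Mid n) ∈ Submonoid.closure (midGens n) := by
    intro x
    have hx : x = ∑ i, Pi.single i (x i) := by
      funext j
      rw [Finset.sum_apply]
      simp [Pi.single_apply]
    rw [hx]
    have : ∀ s : Finset (Fin n),
        (SemidirectProduct.inl (ofAdd (∑ i ∈ s, Pi.single i (x i))) : Mid n)
          ∈ Submonoid.closure (midGens n) := by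
      intro s
      induction s using Finset.cons_induction with
      | empty =>
        rw [Finset.sum_empty, ofAdd_zero, map_one]; exact one_mem _
      | cons a s ha ih =>
        rw [Finset.sum_cons, ofAdd_add, map_mul]
        exact mul_mem (h1 a (x a)) ih
    exact this Finset.univ
  have hg : g = SemidirectProduct.inl g.left * SemidirectProduct.inr g.right :=
    (SemidirectProduct.inl_left_mul_inr_right g).symm
  rw [hg]
  refine mul_mem ?_ (hswap g.right)
  have := key (toAdd g.left)
  rwa [ofAdd_toAdd] at this

lemma length_lower_bound {n : ℕ} (g : Mid n) :
    2 * (toAdd (fsumHom n g)).natAbs + g.right.support.card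
      ≤ 2 * wordLength (midGens n) g := by
  have hne : {k | ∃ l : List (Mid n), l.length = k ∧ (∀ x ∈ l, x ∈ midGens n)
      ∧ l.prod = g}.Nonempty := by
    obtain ⟨l, hl, hp⟩ := exists_word g
    exact ⟨l.length, l, rfl, hl, hp⟩
  have hmem := Nat.sInf_mem hne
  obtain ⟨l, hlen, hl, hp⟩ := hmem
  rw [wordLength, ← hlen, ← hp]
  exact word_weight l hl

end MidProof
namespace MidProof

lemma fsum_w_zpow (m : ℕ) (k : ℤ) :
    (toAdd (fsumHom (m+2) ((midSpecialElt m)^k))).natAbs = k.natAbs := by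
  rw [map_zpow]
  have hw : fsumHom (m+2) (midSpecialElt m) = ofAdd 1 := by
    rw [w_eq, fsumHom_mk]
    congr 1
    simp [Pi.single_apply]
  rw [hw, toAdd_zpow]
  simp

lemma right_w_zpow (m : ℕ) (k : ℤ) :
    ((midSpecialElt m)^k).right = (finRotate (m+2))^k := by
  have h1 : ((midSpecialElt m)^k).right
      = SemidirectProduct.rightHom ((midSpecialElt m)^k) := rfl
  rw [h1, map_zpow]
  congr 1
  rw [w_eq]
  rfl

open Fin.NatCast Fin.CommRing in
lemma sigma_zpow_support (m : ℕ) (k : ℤ) (h : ¬ ((m+2 : ℤ) ∣ k)) :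
    ((finRotate (m+2)) ^ k : Equiv.Perm (Fin (m+2))).support.card = m + 2 := by
  have hpos : (0:ℤ) < (m+2:ℤ) := by positivity
  set r : ℕ := (k % (m+2:ℤ)).toNat with hrdef
  have hr0 : (0:ℤ) ≤ k % (m+2:ℤ) := Int.emod_nonneg k (by omega)
  have hrlt : k % (m+2:ℤ) < (m+2:ℤ) := Int.emod_lt_of_pos k hpos
  have hrcast : ((r:ℤ)) = k % (m+2:ℤ) := Int.toNat_of_nonneg hr0
  have hrne : r ≠ 0 := by
    intro h0
    apply h
    apply Int.dvd_of_emod_eq_zero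
    rw [← hrcast, h0]
    rfl
  have hrlt' : r < m + 2 := by omega
  have hzpow : (finRotate (m+2)) ^ k = (finRotate (m+2)) ^ r := by
    conv_lhs => rw [← Int.mul_ediv_add_emod k (m+2:ℤ)]
    rw [zpow_add, zpow_mul, ← hrcast, zpow_natCast,
      show ((m:ℤ)+2) = ((m+2:ℕ) : ℤ) by push_cast; ring,
      zpow_natCast, sigma_pow_n, one_zpow, one_mul]
  rw [hzpow]
  have huniv : ((finRotate (m+2)) ^ r).support = Finset.univ := by
    refine Finset.eq_univ_iff_forall.mpr fun x => ?_
    rw [Equiv.Perm.mem_support, sigma_pow_apply]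
    intro hx
    have : ((r : Fin (m+2))) = 0 := by
      have := add_eq_left.mp hx
      exact this
    rw [Fin.natCast_eq_zero] at this
    have hle := Nat.le_of_dvd (Nat.pos_of_ne_zero hrne) this
    omega
  rw [huniv, Finset.card_univ, Fintype.card_fin]

lemma natAbs_big_of_dvd (m : ℕ) (k : ℤ) (h : (m+2 : ℤ) ∣ k) (hk : k ≠ 0) :
    m + 2 ≤ k.natAbs := by
  have h3 : ((m:ℤ)+2).natAbs = m + 2 := by
    rw [show ((m:ℤ)+2) = ((m+2:ℕ):ℤ) by push_cast; ring, Int.natAbs_natCast]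
  exact Nat.le_of_dvd (Int.natAbs_pos.mpr hk) (h3 ▸ Int.natAbs_dvd_natAbs.mpr h)

lemma wl_w_le (m : ℕ) : wordLength (midGens (m+2)) (midSpecialElt m) ≤ m + 2 := by
  apply Nat.sInf_le
  refine ⟨SemidirectProduct.inl (φ := permAction (m+2) ℤ)
      (ofAdd (Pi.single (0 : Fin (m+2)) (1:ℤ))) ::
    (List.finRange (m+1)).map
      (fun i => SemidirectProduct.inr (Equiv.swap i.castSucc i.succ)), ?_, ?_, ?_⟩
  · simp
  · intro x hx
    rcases List.mem_cons.mp hx with rfl | hx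
    · exact Or.inl ⟨0, Or.inl rfl⟩
    · obtain ⟨i, _, rfl⟩ := List.mem_map.mp hx
      refine Or.inr ⟨i.castSucc, i.succ, 0, ?_, ?_⟩
      · rw [Ne, Fin.ext_iff, Fin.coe_castSucc, Fin.val_succ]
        omega
      · refine SemidirectProduct.ext ?_ rfl
        simp
  · rw [List.prod_cons, midSpecialElt]

end MidProof
/-- In the interval `[1, w]` of the middle group `Mid(B_n)` (`n = m + 2 ≥ 2`) with respect to
its full generating set, the only elements commuting with the special element `w` are `1`
and `w`. -/
theorem mid_commuting_with_w (m : ℕ) (u : Mid (m + 2))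
    (hu : wordLength (midGens (m + 2)) u +
        wordLength (midGens (m + 2)) (u⁻¹ * midSpecialElt m) =
        wordLength (midGens (m + 2)) (midSpecialElt m))
    (hcomm : u * midSpecialElt m = midSpecialElt m * u) :
    u = 1 ∨ u = midSpecialElt m := by
  obtain ⟨k, hk⟩ := MidProof.commuting_eq_zpow m u hcomm
  by_cases hk0 : k = 0
  · left; rw [hk, hk0, zpow_zero]
  by_cases hk1 : k = 1
  · right; rw [hk, hk1, zpow_one]
  exfalso
  have huw : u⁻¹ * midSpecialElt m = (midSpecialElt m) ^ (1 - k) := by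
    rw [hk, ← zpow_neg, show (1:ℤ) - k = -k + 1 by ring, zpow_add, zpow_one]
  -- lower bounds
  have hA := MidProof.length_lower_bound (n := m+2) ((midSpecialElt m) ^ k)
  have hB := MidProof.length_lower_bound (n := m+2) ((midSpecialElt m) ^ (1-k))
  rw [MidProof.fsum_w_zpow, MidProof.right_w_zpow] at hA hB
  -- total length bound
  have htot : wordLength (midGens (m+2)) ((midSpecialElt m) ^ k) +
      wordLength (midGens (m+2)) ((midSpecialElt m) ^ (1-k)) ≤ m + 2 := by
    rw [← hk, ← huw]
    rw [hu]
    exact MidProof.wl_w_le m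
  have hk1' : 1 - k ≠ 0 := by omega
  have hna : 1 ≤ k.natAbs := by omega
  have hnb : 1 ≤ (1-k).natAbs := by omega
  by_cases hdvd : (m+2 : ℤ) ∣ k
  · have h1 : m + 2 ≤ k.natAbs := MidProof.natAbs_big_of_dvd m k hdvd hk0
    have h2 : ¬ ((m+2:ℤ) ∣ (1-k)) := by
      intro hd
      have : (m+2:ℤ) ∣ 1 := by
        have := Int.dvd_add hdvd hd
        simpa using this
      have := Int.le_of_dvd one_pos this
      omega
    rw [MidProof.sigma_zpow_support m _ h2] at hB
    omega
  · rw [MidProof.sigma_zpow_support m _ hdvd] at hA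
    by_cases hdvd2 : (m+2 : ℤ) ∣ (1-k)
    · have h1 : m + 2 ≤ (1-k).natAbs := MidProof.natAbs_big_of_dvd m (1-k) hdvd2 hk1'
      omega
    · rw [MidProof.sigma_zpow_support m _ hdvd2] at hB
      omega
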